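/- Let L ≥ 11 and let μ ∈ {0,1}^L be a configuration on the ring ℤ/Lℤ. Suppose μ satisfies: (1) for every site x with μₓ = 1 and μₓ₋₁ = μₓ₊₁ = 0 one has μₓ₋₂ = μₓ₊₂ = 0; and (2) for every x with μₓ = μₓ₊₁ = 1 the three sites on either side of the pair are empty (μₓ₋₁ = μₓ₋₂ = μₓ₋₃ = 0 and μₓ₊₂ = μₓ₊₃ = μₓ₊₄ = 0), and if μₓ₊₅ = 1 then μₓ₊₆ = 0, and if μₓ₋₄ = 1 then μₓ₋₅ = 0. Then μ admits a unique tiling of the ring by void tiles V = (0), monomer tiles M = (100), and dimer tiles D = (011000). -/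
import Mathlib


/-- The three tile types: void V = (0), monomer M = (100), dimer D = (011000). -/
inductive VMDTile | V | M | D
deriving DecidableEq

/-- The length of a tile. -/
def VMDTile.len : VMDTile → ℕ
  | .V => 1
  | .M => 3
  | .D => 6

/-- The occupation pattern of a tile at offset k. -/
def VMDTile.pat : VMDTile → ℕ → Fin 2
  | .V, _ => 0
  | .M, k => if k = 0 then 1 else 0
  | .D, k => if k = 1 ∨ k = 2 then 1 else 0

/-- `s` is a VMD tiling of the ring ℤ/Lℤ reproducing the configuration `μ`:
`s x = some τ` means a tile of type τ starts at site x; every site is covered by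
exactly one tile, and the concatenated patterns give back μ. -/
def IsVMDTiling {L : ℕ} (μ : ZMod L → Fin 2) (s : ZMod L → Option VMDTile) : Prop :=
  (∀ y : ZMod L, ∃! p : ZMod L × VMDTile,
      s p.1 = some p.2 ∧ ∃ k : ℕ, k < p.2.len ∧ y = p.1 + (k : ZMod L)) ∧
  (∀ x : ZMod L, ∀ τ : VMDTile, s x = some τ →
      ∀ k : ℕ, k < τ.len → μ (x + (k : ZMod L)) = τ.pat k)

namespace VMD1




variable {L : ℕ} (μ : ZMod L → Fin 2)

def sD (x : ZMod L) : Prop := μ (x + 1) = 1 ∧ μ (x + 2) = 1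
def sM (x : ZMod L) : Prop := μ x = 1 ∧ μ (x - 1) = 0 ∧ μ (x + 1) = 0
def cov (x : ZMod L) : Prop :=
  sM μ (x - 1) ∨ sM μ (x - 2) ∨ sD μ (x - 1) ∨ sD μ (x - 2) ∨ sD μ (x - 3) ∨
    sD μ (x - 4) ∨ sD μ (x - 5)
def sV (x : ZMod L) : Prop := ¬ sD μ x ∧ ¬ sM μ x ∧ ¬ cov μ x

open Classical in
noncomputable def canon (x : ZMod L) : Option VMDTile :=
  if sD μ x then some .D else if sM μ x then some .M else if cov μ x then none else some .V

lemma clash {x y : ZMod L} (hxy : x = y) (e0 : μ x = 0) (e1 : μ y = 1) : False := by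
  subst hxy; rw [e0] at e1; exact absurd e1 (by decide)

variable (hyp1 : ∀ x : ZMod L, μ x = 1 → μ (x - 1) = 0 → μ (x + 1) = 0 →
        μ (x - 2) = 0 ∧ μ (x + 2) = 0)
variable (hyp2 : ∀ x : ZMod L, μ x = 1 → μ (x + 1) = 1 →
        (μ (x - 1) = 0 ∧ μ (x - 2) = 0 ∧ μ (x - 3) = 0 ∧
          μ (x + 2) = 0 ∧ μ (x + 3) = 0 ∧ μ (x + 4) = 0) ∧
        (μ (x + 5) = 1 → μ (x + 6) = 0) ∧
        (μ (x - 4) = 1 → μ (x - 5) = 0))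

include hyp2 in
lemma dfacts (p : ZMod L) (h : sD μ p) :
    μ (p - 2) = 0 ∧ μ (p - 1) = 0 ∧ μ p = 0 ∧ μ (p + 3) = 0 ∧ μ (p + 4) = 0 ∧ μ (p + 5) = 0
      ∧ (μ (p + 6) = 1 → μ (p + 7) = 0) ∧ (μ (p - 3) = 1 → μ (p - 4) = 0) := by
  obtain ⟨ha, hb⟩ := h
  obtain ⟨⟨c1, c2, c3, c4, c5, c6⟩, c7, c8⟩ :=
    hyp2 (p + 1) ha (by rw [show p + 1 + 1 = p + 2 by ring]; exact hb)
  refine ⟨?_, ?_, ?_, ?_, ?_, ?_, ?_, ?_⟩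
  · rw [show p - 2 = p + 1 - 3 by ring]; exact c3
  · rw [show p - 1 = p + 1 - 2 by ring]; exact c2
  · rw [show p = p + 1 - 1 by ring]; exact c1
  · rw [show p + 3 = p + 1 + 2 by ring]; exact c4
  · rw [show p + 4 = p + 1 + 3 by ring]; exact c5
  · rw [show p + 5 = p + 1 + 4 by ring]; exact c6
  · intro h6
    rw [show p + 7 = p + 1 + 6 by ring]
    exact c7 (by rw [show p + 1 + 5 = p + 6 by ring]; exact h6)
  · intro h3
    rw [show p - 4 = p + 1 - 5 by ring]
    exact c8 (by rw [show p + 1 - 4 = p - 3 by ring]; exact h3)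

include hyp1 in
lemma mfacts (p : ZMod L) (h : sM μ p) : μ (p - 2) = 0 ∧ μ (p + 2) = 0 :=
  hyp1 p h.1 h.2.1 h.2.2

lemma sD_sM {x : ZMod L} (hd : sD μ x) (hm : sM μ x) : False :=
  clash μ rfl hm.2.2 hd.1

section exclusions
variable {y : ZMod L}

include hyp1 in
lemma ex12 (hd : sD μ y) (hm : sM μ (y - 1)) : False :=
  clash μ (show y - 1 + 2 = y + 1 by ring) (mfacts μ hyp1 _ hm).2 hd.1

include hyp2 in
lemma ex13 (hd : sD μ y) (hm : sM μ (y - 2)) : False :=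
  clash μ rfl (dfacts μ hyp2 y hd).1 hm.1

include hyp2 in
lemma ex14 (hd : sD μ y) (hd' : sD μ (y - 3)) : False :=
  clash μ (show y - 3 + 4 = y + 1 by ring) (dfacts μ hyp2 _ hd').2.2.2.2.1 hd.1

include hyp2 in
lemma ex15 (hd : sD μ y) (hd' : sD μ (y - 4)) : False :=
  clash μ (show y - 4 + 5 = y + 1 by ring) (dfacts μ hyp2 _ hd').2.2.2.2.2.1 hd.1

include hyp2 in
lemma ex16 (hd : sD μ y) (hd' : sD μ (y - 5)) : False := by
  have c7 := (dfacts μ hyp2 _ hd').2.2.2.2.2.2.1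
  have : μ (y - 5 + 7) = 0 :=
    c7 (by rw [show y - 5 + 6 = y + 1 by ring]; exact hd.1)
  exact clash μ (show y - 5 + 7 = y + 2 by ring) this hd.2

lemma ex23 (hm : sM μ (y - 1)) (hm' : sM μ (y - 2)) : False :=
  clash μ (show y - 1 - 1 = y - 2 by ring) hm.2.1 hm'.1

lemma ex24 (hm : sM μ (y - 1)) (hd : sD μ (y - 3)) : False :=
  clash μ (show y - 1 - 1 = y - 3 + 1 by ring) hm.2.1 hd.1

lemma ex25 (hm : sM μ (y - 1)) (hd : sD μ (y - 4)) : False :=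
  clash μ (show y - 1 - 1 = y - 4 + 2 by ring) hm.2.1 hd.2

include hyp2 in
lemma ex26 (hm : sM μ (y - 1)) (hd : sD μ (y - 5)) : False :=
  clash μ (show y - 5 + 4 = y - 1 by ring) (dfacts μ hyp2 _ hd).2.2.2.2.1 hm.1

lemma ex34 (hm : sM μ (y - 2)) (hd : sD μ (y - 3)) : False :=
  clash μ (show y - 2 + 1 = y - 3 + 2 by ring) hm.2.2 hd.2

lemma ex35 (hm : sM μ (y - 2)) (hd : sD μ (y - 4)) : False :=
  clash μ (show y - 2 - 1 = y - 4 + 1 by ring) hm.2.1 hd.1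

lemma ex36 (hm : sM μ (y - 2)) (hd : sD μ (y - 5)) : False :=
  clash μ (show y - 2 - 1 = y - 5 + 2 by ring) hm.2.1 hd.2

include hyp2 in
lemma ex45 (hd : sD μ (y - 3)) (hd' : sD μ (y - 4)) : False :=
  clash μ (show y - 4 + 3 = y - 3 + 2 by ring) (dfacts μ hyp2 _ hd').2.2.2.1 hd.2

include hyp2 in
lemma ex46 (hd : sD μ (y - 3)) (hd' : sD μ (y - 5)) : False :=
  clash μ (show y - 5 + 3 = y - 3 + 1 by ring) (dfacts μ hyp2 _ hd').2.2.2.1 hd.1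

include hyp2 in
lemma ex56 (hd : sD μ (y - 4)) (hd' : sD μ (y - 5)) : False :=
  clash μ (show y - 5 + 3 = y - 4 + 2 by ring) (dfacts μ hyp2 _ hd').2.2.2.1 hd.2

include hyp2 in
lemma exA12 (hd : sD μ (y - 1)) (hd' : sD μ (y - 2)) : False :=
  clash μ (show y - 2 + 3 = y - 1 + 2 by ring) (dfacts μ hyp2 _ hd').2.2.2.1 hd.2

lemma exA13 (hd : sD μ (y - 1)) (hm : sM μ y) : False :=
  clash μ (show y + 1 = y - 1 + 2 by ring) hm.2.2 hd.2

lemma exA23 (hd : sD μ (y - 2)) (hm : sM μ y) : False :=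
  clash μ (show y - 1 = y - 2 + 1 by ring) hm.2.1 hd.1

lemma exV1 (hv : sV μ y) (hd : sD μ y) : False := hv.1 hd
lemma exV2 (hv : sV μ y) (hm : sM μ (y - 1)) : False := hv.2.2 (Or.inl hm)
lemma exV3 (hv : sV μ y) (hm : sM μ (y - 2)) : False := hv.2.2 (Or.inr (Or.inl hm))
lemma exV5 (hv : sV μ y) (hd : sD μ (y - 3)) : False :=
  hv.2.2 (Or.inr (Or.inr (Or.inr (Or.inr (Or.inl hd)))))
lemma exV6 (hv : sV μ y) (hd : sD μ (y - 4)) : False :=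
  hv.2.2 (Or.inr (Or.inr (Or.inr (Or.inr (Or.inr (Or.inl hd))))))
lemma exV7 (hv : sV μ y) (hd : sD μ (y - 5)) : False :=
  hv.2.2 (Or.inr (Or.inr (Or.inr (Or.inr (Or.inr (Or.inr hd))))))

end exclusions

lemma fin2 (a : Fin 2) : a = 0 ∨ a = 1 := by omega

lemma sV_zero {x : ZMod L} (hv : sV μ x) : μ x = 0 := by
  rcases fin2 (μ x) with h | h
  · exact h
  exfalso
  rcases fin2 (μ (x + 1)) with e | e
  · rcases fin2 (μ (x - 1)) with f | f
    · exact hv.2.1 ⟨h, f, e⟩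
    · exact hv.2.2 (Or.inr (Or.inr (Or.inr (Or.inl
        ⟨by rw [show x - 2 + 1 = x - 1 by ring]; exact f,
         by rw [show x - 2 + 2 = x by ring]; exact h⟩))))
  · exact hv.2.2 (Or.inr (Or.inr (Or.inl
      ⟨by rw [show x - 1 + 1 = x by ring]; exact h,
       by rw [show x - 1 + 2 = x + 1 by ring]; exact e⟩)))

lemma covOfOne1 {x : ZMod L} (h : μ (x - 1) = 1) (h0 : μ x = 0) : cov μ x := by
  rcases fin2 (μ (x - 2)) with e | e
  · exact Or.inl ⟨h, by rw [show x - 1 - 1 = x - 2 by ring]; exact e,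
      by rw [show x - 1 + 1 = x by ring]; exact h0⟩
  · exact Or.inr (Or.inr (Or.inr (Or.inr (Or.inl
      ⟨by rw [show x - 3 + 1 = x - 2 by ring]; exact e,
       by rw [show x - 3 + 2 = x - 1 by ring]; exact h⟩))))

lemma covOfOne2 {x : ZMod L} (h : μ (x - 2) = 1) (h0 : μ (x - 1) = 0) : cov μ x := by
  rcases fin2 (μ (x - 3)) with e | e
  · exact Or.inr (Or.inl ⟨h, by rw [show x - 2 - 1 = x - 3 by ring]; exact e,
      by rw [show x - 2 + 1 = x - 1 by ring]; exact h0⟩)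
  · exact Or.inr (Or.inr (Or.inr (Or.inr (Or.inr (Or.inl
      ⟨by rw [show x - 4 + 1 = x - 3 by ring]; exact e,
       by rw [show x - 4 + 2 = x - 2 by ring]; exact h⟩)))))

lemma canon_D {x : ZMod L} (h : sD μ x) : canon μ x = some .D := by
  unfold canon; rw [if_pos h]

lemma canon_M {x : ZMod L} (hd : ¬ sD μ x) (h : sM μ x) : canon μ x = some .M := by
  unfold canon; rw [if_neg hd, if_pos h]

lemma canon_none {x : ZMod L} (hd : ¬ sD μ x) (hm : ¬ sM μ x) (hc : cov μ x) :
    canon μ x = none := by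
  unfold canon; rw [if_neg hd, if_neg hm, if_pos hc]

lemma canon_V {x : ZMod L} (hd : ¬ sD μ x) (hm : ¬ sM μ x) (hc : ¬ cov μ x) :
    canon μ x = some .V := by
  unfold canon; rw [if_neg hd, if_neg hm, if_neg hc]

lemma canon_inv {x : ZMod L} {τ : VMDTile} (h : canon μ x = some τ) :
    (τ = .D ∧ sD μ x) ∨ (τ = .M ∧ sM μ x) ∨ (τ = .V ∧ sV μ x) := by
  unfold canon at h
  split_ifs at h with hd hm hc
  · exact Or.inl ⟨(Option.some_inj.mp h).symm, hd⟩
  · exact Or.inr (Or.inl ⟨(Option.some_inj.mp h).symm, hm⟩)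
  · refine Or.inr (Or.inr ⟨(Option.some_inj.mp h).symm, ?_⟩)
    exact ⟨hd, hm, hc⟩

lemma coverInv {y p : ZMod L} {τ : VMDTile} {k : ℕ}
    (hc : canon μ p = some τ) (hk : k < τ.len) (hy : y = p + (k : ZMod L)) :
    (p = y - 1 ∧ τ = .D ∧ sD μ (y - 1)) ∨ (p = y - 2 ∧ τ = .D ∧ sD μ (y - 2)) ∨
    (p = y ∧ τ = .M ∧ sM μ y) ∨
    (p = y ∧ τ = .D ∧ sD μ y) ∨ (p = y - 1 ∧ τ = .M ∧ sM μ (y - 1)) ∨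
    (p = y - 2 ∧ τ = .M ∧ sM μ (y - 2)) ∨ (p = y - 3 ∧ τ = .D ∧ sD μ (y - 3)) ∨
    (p = y - 4 ∧ τ = .D ∧ sD μ (y - 4)) ∨ (p = y - 5 ∧ τ = .D ∧ sD μ (y - 5)) ∨
    (p = y ∧ τ = .V ∧ sV μ y) := by
  rcases canon_inv μ hc with ⟨rfl, hs⟩ | ⟨rfl, hs⟩ | ⟨rfl, hs⟩
  · -- D
    simp only [VMDTile.len] at hk
    interval_cases k
    · have hp : p = y := by rw [hy]; push_cast; ring
      subst hp
      exact Or.inr (Or.inr (Or.inr (Or.inl ⟨rfl, rfl, hs⟩)))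
    · have hp : p = y - 1 := by rw [hy]; push_cast; ring
      subst hp
      exact Or.inl ⟨rfl, rfl, hs⟩
    · have hp : p = y - 2 := by rw [hy]; push_cast; ring
      subst hp
      exact Or.inr (Or.inl ⟨rfl, rfl, hs⟩)
    · have hp : p = y - 3 := by rw [hy]; push_cast; ring
      subst hp
      exact Or.inr (Or.inr (Or.inr (Or.inr (Or.inr (Or.inr (Or.inl ⟨rfl, rfl, hs⟩))))))
    · have hp : p = y - 4 := by rw [hy]; push_cast; ring
      subst hp
      exact Or.inr (Or.inr (Or.inr (Or.inr (Or.inr (Or.inr (Or.inr (Or.inl ⟨rfl, rfl, hs⟩)))))))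
    · have hp : p = y - 5 := by rw [hy]; push_cast; ring
      subst hp
      exact Or.inr (Or.inr (Or.inr (Or.inr (Or.inr (Or.inr (Or.inr (Or.inr (Or.inl ⟨rfl, rfl, hs⟩))))))))
  · -- M
    simp only [VMDTile.len] at hk
    interval_cases k
    · have hp : p = y := by rw [hy]; push_cast; ring
      subst hp
      exact Or.inr (Or.inr (Or.inl ⟨rfl, rfl, hs⟩))
    · have hp : p = y - 1 := by rw [hy]; push_cast; ring
      subst hp
      exact Or.inr (Or.inr (Or.inr (Or.inr (Or.inl ⟨rfl, rfl, hs⟩))))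
    · have hp : p = y - 2 := by rw [hy]; push_cast; ring
      subst hp
      exact Or.inr (Or.inr (Or.inr (Or.inr (Or.inr (Or.inl ⟨rfl, rfl, hs⟩)))))
  · -- V
    simp only [VMDTile.len] at hk
    interval_cases k
    have hp : p = y := by rw [hy]; push_cast; ring
    subst hp
    exact Or.inr (Or.inr (Or.inr (Or.inr (Or.inr (Or.inr (Or.inr (Or.inr (Or.inr ⟨rfl, rfl, hs⟩))))))))

include hyp1 hyp2 in
lemma covA {y p : ZMod L} {τ : VMDTile} {k : ℕ} (hμ : μ y = 1)
    (hc : canon μ p = some τ) (hk : k < τ.len) (hy : y = p + (k : ZMod L)) :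
    (p = y - 1 ∧ τ = .D ∧ sD μ (y - 1)) ∨ (p = y - 2 ∧ τ = .D ∧ sD μ (y - 2)) ∨
    (p = y ∧ τ = .M ∧ sM μ y) := by
  rcases coverInv μ hc hk hy with h | h | h | h | h | h | h | h | h | h
  · exact Or.inl h
  · exact Or.inr (Or.inl h)
  · exact Or.inr (Or.inr h)
  · exact absurd ((dfacts μ hyp2 _ h.2.2).2.2.1) (by rw [hμ]; decide)
  · exact (clash μ (show y - 1 + 1 = y by ring) h.2.2.2.2 hμ).elim
  · exact (clash μ (show y - 2 + 2 = y by ring) (mfacts μ hyp1 _ h.2.2).2 hμ).elim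
  · exact (clash μ (show y - 3 + 3 = y by ring) (dfacts μ hyp2 _ h.2.2).2.2.2.1 hμ).elim
  · exact (clash μ (show y - 4 + 4 = y by ring) (dfacts μ hyp2 _ h.2.2).2.2.2.2.1 hμ).elim
  · exact (clash μ (show y - 5 + 5 = y by ring) (dfacts μ hyp2 _ h.2.2).2.2.2.2.2.1 hμ).elim
  · exact (clash μ rfl (sV_zero μ h.2.2) hμ).elim

lemma covB {y p : ZMod L} {τ : VMDTile} {k : ℕ} (hμ : μ y = 0)
    (hc : canon μ p = some τ) (hk : k < τ.len) (hy : y = p + (k : ZMod L)) :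
    (p = y ∧ τ = .D ∧ sD μ y) ∨ (p = y - 1 ∧ τ = .M ∧ sM μ (y - 1)) ∨
    (p = y - 2 ∧ τ = .M ∧ sM μ (y - 2)) ∨ (p = y - 3 ∧ τ = .D ∧ sD μ (y - 3)) ∨
    (p = y - 4 ∧ τ = .D ∧ sD μ (y - 4)) ∨ (p = y - 5 ∧ τ = .D ∧ sD μ (y - 5)) ∨
    (p = y ∧ τ = .V ∧ sV μ y) := by
  rcases coverInv μ hc hk hy with h | h | h | h | h | h | h | h | h | h
  · exact (clash μ (show y = y - 1 + 1 by ring) hμ h.2.2.1).elim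
  · exact (clash μ (show y = y - 2 + 2 by ring) hμ h.2.2.2).elim
  · exact (clash μ rfl hμ h.2.2.1).elim
  · exact Or.inl h
  · exact Or.inr (Or.inl h)
  · exact Or.inr (Or.inr (Or.inl h))
  · exact Or.inr (Or.inr (Or.inr (Or.inl h)))
  · exact Or.inr (Or.inr (Or.inr (Or.inr (Or.inl h))))
  · exact Or.inr (Or.inr (Or.inr (Or.inr (Or.inr (Or.inl h)))))
  · exact Or.inr (Or.inr (Or.inr (Or.inr (Or.inr (Or.inr h)))))

set_option maxHeartbeats 2000000 in
include hyp1 hyp2 in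
lemma point_unique {y p p' : ZMod L} {τ τ' : VMDTile} {k k' : ℕ}
    (hc : canon μ p = some τ) (hk : k < τ.len) (hy : y = p + (k : ZMod L))
    (hc' : canon μ p' = some τ') (hk' : k' < τ'.len) (hy' : y = p' + (k' : ZMod L)) :
    p = p' ∧ τ = τ' := by
  rcases fin2 (μ y) with hμ | hμ
  · rcases covB μ hμ hc hk hy with ⟨rfl, rfl, g⟩|⟨rfl, rfl, g⟩|⟨rfl, rfl, g⟩|⟨rfl, rfl, g⟩|⟨rfl, rfl, g⟩|⟨rfl, rfl, g⟩|⟨rfl, rfl, g⟩ <;>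
      rcases covB μ hμ hc' hk' hy' with ⟨rfl, rfl, g'⟩|⟨rfl, rfl, g'⟩|⟨rfl, rfl, g'⟩|⟨rfl, rfl, g'⟩|⟨rfl, rfl, g'⟩|⟨rfl, rfl, g'⟩|⟨rfl, rfl, g'⟩ <;>
      first
        | exact ⟨rfl, rfl⟩
        | (exfalso; solve_by_elim [ex12 μ hyp1, ex13 μ hyp2, ex14 μ hyp2, ex15 μ hyp2,
            ex16 μ hyp2, ex23 μ, ex24 μ, ex25 μ, ex26 μ hyp2, ex34 μ, ex35 μ, ex36 μ,
            ex45 μ hyp2, ex46 μ hyp2, ex56 μ hyp2, exV1 μ, exV2 μ, exV3 μ, exV5 μ,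
            exV6 μ, exV7 μ])
  · rcases covA μ hyp1 hyp2 hμ hc hk hy with ⟨rfl, rfl, g⟩|⟨rfl, rfl, g⟩|⟨rfl, rfl, g⟩ <;>
      rcases covA μ hyp1 hyp2 hμ hc' hk' hy' with ⟨rfl, rfl, g'⟩|⟨rfl, rfl, g'⟩|⟨rfl, rfl, g'⟩ <;>
      first
        | exact ⟨rfl, rfl⟩
        | (exfalso; solve_by_elim [exA12 μ hyp2, exA13 μ, exA23 μ])

lemma exist_cover (y : ZMod L) :
    ∃ (p : ZMod L) (τ : VMDTile) (k : ℕ),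
      canon μ p = some τ ∧ k < τ.len ∧ y = p + (k : ZMod L) := by
  rcases fin2 (μ y) with hμ | hμ
  · by_cases g1 : sD μ y
    · exact ⟨y, .D, 0, canon_D μ g1, by norm_num [VMDTile.len], by push_cast; ring⟩
    by_cases g2 : sM μ (y - 1)
    · refine ⟨y - 1, .M, 1, canon_M μ ?_ g2, by norm_num [VMDTile.len], by push_cast; ring⟩
      intro hd
      exact clash μ (show y = y - 1 + 1 by ring) hμ hd.1
    by_cases g3 : sM μ (y - 2)
    · refine ⟨y - 2, .M, 2, canon_M μ ?_ g3, by norm_num [VMDTile.len], by push_cast; ring⟩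
      intro hd
      exact clash μ (show y = y - 2 + 2 by ring) hμ hd.2
    by_cases g4 : sD μ (y - 3)
    · exact ⟨y - 3, .D, 3, canon_D μ g4, by norm_num [VMDTile.len], by push_cast; ring⟩
    by_cases g5 : sD μ (y - 4)
    · exact ⟨y - 4, .D, 4, canon_D μ g5, by norm_num [VMDTile.len], by push_cast; ring⟩
    by_cases g6 : sD μ (y - 5)
    · exact ⟨y - 5, .D, 5, canon_D μ g6, by norm_num [VMDTile.len], by push_cast; ring⟩
    refine ⟨y, .V, 0, canon_V μ g1 ?_ ?_, by norm_num [VMDTile.len], by push_cast; ring⟩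
    · intro hm; exact clash μ rfl hμ hm.1
    · rintro (h | h | h | h | h | h | h)
      · exact g2 h
      · exact g3 h
      · exact clash μ (show y = y - 1 + 1 by ring) hμ h.1
      · exact clash μ (show y = y - 2 + 2 by ring) hμ h.2
      · exact g4 h
      · exact g5 h
      · exact g6 h
  · rcases fin2 (μ (y + 1)) with e | e
    · rcases fin2 (μ (y - 1)) with f | f
      · refine ⟨y, .M, 0, canon_M μ ?_ ⟨hμ, f, e⟩, by norm_num [VMDTile.len], by push_cast; ring⟩
        intro hd
        exact clash μ rfl e hd.1
      · refine ⟨y - 2, .D, 2, canon_D μ ⟨?_, ?_⟩, by norm_num [VMDTile.len], by push_cast; ring⟩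
        · rw [show y - 2 + 1 = y - 1 by ring]; exact f
        · rw [show y - 2 + 2 = y by ring]; exact hμ
    · refine ⟨y - 1, .D, 1, canon_D μ ⟨?_, ?_⟩, by norm_num [VMDTile.len], by push_cast; ring⟩
      · rw [show y - 1 + 1 = y by ring]; exact hμ
      · rw [show y - 1 + 2 = y + 1 by ring]; exact e


include hyp1 hyp2 in
lemma canon_tiling : IsVMDTiling μ (canon μ) := by
  constructor
  · intro y
    obtain ⟨p, τ, k, hc, hk, hy⟩ := exist_cover μ y
    refine ⟨(p, τ), ⟨hc, k, hk, hy⟩, ?_⟩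
    rintro ⟨p', τ'⟩ ⟨hc', k', hk', hy'⟩
    obtain ⟨e1, e2⟩ := point_unique μ hyp1 hyp2 hc' hk' hy' hc hk hy
    exact Prod.ext e1 e2
  · intro x τ hc k hk
    rcases canon_inv μ hc with ⟨rfl, hs⟩ | ⟨rfl, hs⟩ | ⟨rfl, hs⟩
    · have df := dfacts μ hyp2 x hs
      simp only [VMDTile.len] at hk
      interval_cases k
      · simpa [VMDTile.pat] using df.2.2.1
      · simpa [VMDTile.pat] using hs.1
      · simpa [VMDTile.pat] using hs.2
      · simpa [VMDTile.pat] using df.2.2.2.1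
      · simpa [VMDTile.pat] using df.2.2.2.2.1
      · simpa [VMDTile.pat] using df.2.2.2.2.2.1
    · simp only [VMDTile.len] at hk
      interval_cases k
      · simpa [VMDTile.pat] using hs.1
      · simpa [VMDTile.pat] using hs.2.2
      · simpa [VMDTile.pat] using (mfacts μ hyp1 x hs).2
    · simp only [VMDTile.len] at hk
      interval_cases k
      simpa [VMDTile.pat] using sV_zero μ hs

variable {s : ZMod L → Option VMDTile}

lemma tiling_D (hs : IsVMDTiling μ s) {x : ZMod L} (hd : sD μ x) : s x = some .D := by
  obtain ⟨⟨p, τ⟩, ⟨hp, k, hk, hyk⟩, -⟩ := hs.1 (x + 1)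
  simp only at hp hyk hk
  have hpat := hs.2 p τ hp
  have hpk : τ.pat k = 1 := by rw [← hpat k hk, ← hyk]; exact hd.1
  rcases τ with _ | _ | _ <;> simp only [VMDTile.len] at hk <;> interval_cases k <;>
    simp only [VMDTile.pat] at hpk <;> try exact absurd hpk (by decide)
  · -- M, k = 0 : p = x + 1
    have hp' : p = x + 1 := by push_cast at hyk; linear_combination -hyk
    subst hp'
    have := hpat 1 (by norm_num [VMDTile.len])
    rw [show ((1:ℕ):ZMod L) = 1 by push_cast; ring] at this
    exact absurd (clash μ (show x + 1 + 1 = x + 2 by ring)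
      (by rw [this]; decide) hd.2) (fun h => h)
  · -- D, k = 1 : p = x
    have hp' : p = x := by push_cast at hyk; linear_combination -hyk
    rw [hp'] at hp; exact hp
  · -- D, k = 2 : p = x - 1
    have hp' : p = x - 1 := by push_cast at hyk; linear_combination -hyk
    subst hp'
    have := hpat 3 (by norm_num [VMDTile.len])
    rw [show x - 1 + ((3:ℕ):ZMod L) = x + 2 by push_cast; ring] at this
    exact absurd hd.2 (by rw [this]; decide)

lemma tiling_M (hs : IsVMDTiling μ s) {x : ZMod L} (hm : sM μ x) : s x = some .M := by
  obtain ⟨⟨p, τ⟩, ⟨hp, k, hk, hyk⟩, -⟩ := hs.1 x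
  simp only at hp hyk hk
  have hpat := hs.2 p τ hp
  have hpk : τ.pat k = 1 := by rw [← hpat k hk, ← hyk]; exact hm.1
  rcases τ with _ | _ | _ <;> simp only [VMDTile.len] at hk <;> interval_cases k <;>
    simp only [VMDTile.pat] at hpk <;> try exact absurd hpk (by decide)
  · -- M, k = 0 : p = x
    have hp' : p = x := by push_cast at hyk; linear_combination -hyk
    rw [hp'] at hp; exact hp
  · -- D, k = 1 : p = x - 1
    have hp' : p = x - 1 := by push_cast at hyk; linear_combination -hyk
    subst hp'
    have := hpat 2 (by norm_num [VMDTile.len])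
    rw [show x - 1 + ((2:ℕ):ZMod L) = x + 1 by push_cast; ring] at this
    exact absurd hm.2.2 (by rw [this]; decide)
  · -- D, k = 2 : p = x - 2
    have hp' : p = x - 2 := by push_cast at hyk; linear_combination -hyk
    subst hp'
    have := hpat 1 (by norm_num [VMDTile.len])
    rw [show x - 2 + ((1:ℕ):ZMod L) = x - 1 by push_cast; ring] at this
    exact absurd hm.2.1 (by rw [this]; decide)

lemma tiling_V (hs : IsVMDTiling μ s) {x : ZMod L} (hv : sV μ x) : s x = some .V := by
  obtain ⟨⟨p, τ⟩, ⟨hp, k, hk, hyk⟩, -⟩ := hs.1 x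
  simp only at hp hyk hk
  have hpat := hs.2 p τ hp
  have hx0 : μ x = 0 := sV_zero μ hv
  have hpk : τ.pat k = 0 := by rw [← hpat k hk, ← hyk]; exact hx0
  rcases τ with _ | _ | _ <;> simp only [VMDTile.len] at hk <;> interval_cases k <;>
    simp only [VMDTile.pat] at hpk <;> try exact absurd hpk (by decide)
  · -- V, k = 0 : p = x
    have hp' : p = x := by push_cast at hyk; linear_combination -hyk
    rw [hp'] at hp; exact hp
  · -- M, k = 1 : p = x - 1
    exfalso
    have hp' : p = x - 1 := by push_cast at hyk; linear_combination -hyk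
    subst hp'
    have h0 := hpat 0 (by norm_num [VMDTile.len])
    rw [show x - 1 + ((0:ℕ):ZMod L) = x - 1 by push_cast; ring] at h0
    exact hv.2.2 (covOfOne1 μ (by rw [h0]; decide) hx0)
  · -- M, k = 2 : p = x - 2
    exfalso
    have hp' : p = x - 2 := by push_cast at hyk; linear_combination -hyk
    subst hp'
    have h0 := hpat 0 (by norm_num [VMDTile.len])
    rw [show x - 2 + ((0:ℕ):ZMod L) = x - 2 by push_cast; ring] at h0
    have h1 := hpat 1 (by norm_num [VMDTile.len])
    rw [show x - 2 + ((1:ℕ):ZMod L) = x - 1 by push_cast; ring] at h1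
    exact hv.2.2 (covOfOne2 μ (by rw [h0]; decide) (by rw [h1]; decide))
  · -- D, k = 0 : p = x
    exfalso
    have hp' : p = x := by push_cast at hyk; linear_combination -hyk
    rw [hp'] at hpat
    have h1 := hpat 1 (by norm_num [VMDTile.len])
    rw [show x + ((1:ℕ):ZMod L) = x + 1 by push_cast; ring] at h1
    have h2 := hpat 2 (by norm_num [VMDTile.len])
    rw [show x + ((2:ℕ):ZMod L) = x + 2 by push_cast; ring] at h2
    exact hv.1 ⟨by rw [h1]; decide, by rw [h2]; decide⟩
  · -- D, k = 3 : p = x - 3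
    exfalso
    have hp' : p = x - 3 := by push_cast at hyk; linear_combination -hyk
    subst hp'
    have h1 := hpat 1 (by norm_num [VMDTile.len])
    rw [show x - 3 + ((1:ℕ):ZMod L) = x - 3 + 1 by push_cast; ring] at h1
    have h2 := hpat 2 (by norm_num [VMDTile.len])
    rw [show x - 3 + ((2:ℕ):ZMod L) = x - 3 + 2 by push_cast; ring] at h2
    exact exV5 μ hv ⟨by rw [h1]; decide, by rw [h2]; decide⟩
  · -- D, k = 4 : p = x - 4
    exfalso
    have hp' : p = x - 4 := by push_cast at hyk; linear_combination -hyk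
    subst hp'
    have h1 := hpat 1 (by norm_num [VMDTile.len])
    rw [show x - 4 + ((1:ℕ):ZMod L) = x - 4 + 1 by push_cast; ring] at h1
    have h2 := hpat 2 (by norm_num [VMDTile.len])
    rw [show x - 4 + ((2:ℕ):ZMod L) = x - 4 + 2 by push_cast; ring] at h2
    exact exV6 μ hv ⟨by rw [h1]; decide, by rw [h2]; decide⟩
  · -- D, k = 5 : p = x - 5
    exfalso
    have hp' : p = x - 5 := by push_cast at hyk; linear_combination -hyk
    subst hp'
    have h1 := hpat 1 (by norm_num [VMDTile.len])
    rw [show x - 5 + ((1:ℕ):ZMod L) = x - 5 + 1 by push_cast; ring] at h1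
    have h2 := hpat 2 (by norm_num [VMDTile.len])
    rw [show x - 5 + ((2:ℕ):ZMod L) = x - 5 + 2 by push_cast; ring] at h2
    exact exV7 μ hv ⟨by rw [h1]; decide, by rw [h2]; decide⟩

lemma len_pos (τ : VMDTile) : 0 < τ.len := by cases τ <;> norm_num [VMDTile.len]

lemma no_overlap (hL : 11 ≤ L) (hs : IsVMDTiling μ s) {x : ZMod L} {τ τ' : VMDTile}
    (hsx : s x = some τ) (j : ℕ) (hj1 : 1 ≤ j) (hj5 : j ≤ 5)
    (hj : s (x - (j : ZMod L)) = some τ') (hlen : j < τ'.len) : False := by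
  obtain ⟨w, -, hu⟩ := hs.1 x
  have e1 : ((x, τ) : ZMod L × VMDTile) = w :=
    hu (x, τ) ⟨hsx, 0, len_pos τ, by push_cast; ring⟩
  have e2 : ((x - (j : ZMod L), τ') : ZMod L × VMDTile) = w :=
    hu _ ⟨hj, j, hlen, by push_cast; ring⟩
  have hxx : x = x - (j : ZMod L) := congrArg Prod.fst (e1.trans e2.symm)
  have hz : ((j : ℕ) : ZMod L) = 0 := by linear_combination hxx
  haveI : NeZero L := ⟨by omega⟩
  rw [ZMod.natCast_eq_zero_iff] at hz
  have := Nat.le_of_dvd (by omega) hz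
  omega

omit hyp1 hyp2 in
lemma tiling_unique (hL : 11 ≤ L) (hs : IsVMDTiling μ s) : s = canon μ := by
  funext x
  by_cases g1 : sD μ x
  · rw [tiling_D μ hs g1, canon_D μ g1]
  by_cases g2 : sM μ x
  · rw [tiling_M μ hs g2, canon_M μ g1 g2]
  by_cases g3 : cov μ x
  · rw [canon_none μ g1 g2 g3]
    cases hsx : s x with
    | none => rfl
    | some τ =>
      exfalso
      rcases g3 with h | h | h | h | h | h | h
      · exact no_overlap μ hL hs hsx 1 (by norm_num) (by norm_num)
          (by rw [Nat.cast_one]; exact tiling_M μ hs h) (by norm_num [VMDTile.len])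
      · exact no_overlap μ hL hs hsx 2 (by norm_num) (by norm_num)
          (by rw [Nat.cast_two]; exact tiling_M μ hs h) (by norm_num [VMDTile.len])
      · exact no_overlap μ hL hs hsx 1 (by norm_num) (by norm_num)
          (by rw [Nat.cast_one]; exact tiling_D μ hs h) (by norm_num [VMDTile.len])
      · exact no_overlap μ hL hs hsx 2 (by norm_num) (by norm_num)
          (by rw [Nat.cast_two]; exact tiling_D μ hs h) (by norm_num [VMDTile.len])
      · exact no_overlap μ hL hs hsx 3 (by norm_num) (by norm_num)
          (by rw [show ((3:ℕ):ZMod L) = 3 by push_cast; ring]; exact tiling_D μ hs h)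
          (by norm_num [VMDTile.len])
      · exact no_overlap μ hL hs hsx 4 (by norm_num) (by norm_num)
          (by rw [show ((4:ℕ):ZMod L) = 4 by push_cast; ring]; exact tiling_D μ hs h)
          (by norm_num [VMDTile.len])
      · exact no_overlap μ hL hs hsx 5 (by norm_num) (by norm_num)
          (by rw [show ((5:ℕ):ZMod L) = 5 by push_cast; ring]; exact tiling_D μ hs h)
          (by norm_num [VMDTile.len])
  · rw [tiling_V μ hs ⟨g1, g2, g3⟩, canon_V μ g1 g2 g3]

include hyp1 hyp2 in
theorem main (hL : 11 ≤ L) : ∃! s : ZMod L → Option VMDTile, IsVMDTiling μ s :=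
  ⟨canon μ, canon_tiling μ hyp1 hyp2, fun s hs => tiling_unique μ hL hs⟩

end VMD1

/-- a configuration on the ring satisfying the two combinatorial
conditions admits a unique VMD tiling. -/
theorem stmt_8 (L : ℕ) (hL : 11 ≤ L) (μ : ZMod L → Fin 2)
    (h1 : ∀ x : ZMod L, μ x = 1 → μ (x - 1) = 0 → μ (x + 1) = 0 →
        μ (x - 2) = 0 ∧ μ (x + 2) = 0)
    (h2 : ∀ x : ZMod L, μ x = 1 → μ (x + 1) = 1 →
        (μ (x - 1) = 0 ∧ μ (x - 2) = 0 ∧ μ (x - 3) = 0 ∧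
          μ (x + 2) = 0 ∧ μ (x + 3) = 0 ∧ μ (x + 4) = 0) ∧
        (μ (x + 5) = 1 → μ (x + 6) = 0) ∧
        (μ (x - 4) = 1 → μ (x - 5) = 0)) :
    ∃! s : ZMod L → Option VMDTile, IsVMDTiling μ s := VMD1.main μ h1 h2 hL
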